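/- Let α be a primitive third root of unity, e₁,…,e₅ the standard basis of ℂ⁵, and Λ₀ the ℤ[α]-submodule of ℂ⁵ generated by the vectors eᵢ − β eⱼ for 1 ≤ i < j ≤ 5 and β ∈ {1, α, α²}. Let Λ = {x = (x₁,…,x₅) ∈ ℂ⁵ : xᵢ − β xⱼ ∈ ℤ[α] for all 1 ≤ i < j ≤ 5 and all β ∈ {1,α,α²}}. Then Λ = ℤ[α]e₁ ⊕ ℤ[α]e₂ ⊕ ℤ[α]e₃ ⊕ ℤ[α]e₄ ⊕ (1/(α−1))·ℤ[α]·w, where w = e₁ + e₂ + e₃ + e₄ + e₅, and the quotient group Λ/Λ₀ is isomorphic to (ℤ/3ℤ)². -/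

import Mathlib

namespace Stmt3Aux

def P (α z : ℂ) : Prop := ∃ m n : ℤ, z = (m : ℂ) + n * α

variable {α : ℂ}

lemma P_add {z z' : ℂ} (h : P α z) (h' : P α z') : P α (z + z') := by
  obtain ⟨m, n, rfl⟩ := h; obtain ⟨m', n', rfl⟩ := h'
  exact ⟨m + m', n + n', by push_cast; ring⟩

lemma P_neg {z : ℂ} (h : P α z) : P α (-z) := by
  obtain ⟨m, n, rfl⟩ := h; exact ⟨-m, -n, by push_cast; ring⟩

lemma P_sub {z z' : ℂ} (h : P α z) (h' : P α z') : P α (z - z') := by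
  simpa [sub_eq_add_neg] using P_add h (P_neg h')

lemma P_zero : P α 0 := ⟨0, 0, by simp⟩

lemma smul_decomp (m n : ℤ) (v : Fin 5 → ℂ) :
    ((m : ℂ) + (n : ℂ) * α) • v = m • ((1 : ℂ) • v) + n • (α • v) := by
  rw [one_smul, add_smul, mul_smul, Int.cast_smul_eq_zsmul, Int.cast_smul_eq_zsmul]

lemma mem_of_P {G : AddSubgroup (Fin 5 → ℂ)} {v : Fin 5 → ℂ}
    (h1 : (1 : ℂ) • v ∈ G) (ha : α • v ∈ G) {z : ℂ} (hz : P α z) : z • v ∈ G := by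
  obtain ⟨m, n, rfl⟩ := hz
  rw [smul_decomp]
  exact add_mem (AddSubgroup.zsmul_mem G h1 m) (AddSubgroup.zsmul_mem G ha n)

lemma P_mul (h2 : α ^ 2 + α + 1 = 0) {z z' : ℂ} (h : P α z) (h' : P α z') :
    P α (z * z') := by
  obtain ⟨m, n, rfl⟩ := h; obtain ⟨m', n', rfl⟩ := h'
  exact ⟨m * m' - n * n', m * n' + n * m' - n * n', by
    push_cast; linear_combination ((n : ℂ) * (n' : ℂ)) * h2⟩

lemma him (h2 : α ^ 2 + α + 1 = 0) : α.im ≠ 0 := by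
  intro h
  have hre : α = (α.re : ℂ) := Complex.ext rfl (by simp [h])
  rw [hre] at h2
  have : (α.re : ℂ) ^ 2 + α.re + 1 = 0 := h2
  have h2' : α.re ^ 2 + α.re + 1 = 0 := by exact_mod_cast this
  nlinarith [sq_nonneg (α.re + 1/2)]

noncomputable def NN (α z : ℂ) : ℤ := round (z.im / α.im)
noncomputable def MM (α z : ℂ) : ℤ := round (z.re - (NN α z : ℝ) * α.re)

lemma NN_spec (him : α.im ≠ 0) (m n : ℤ) : NN α ((m : ℂ) + n * α) = n := by
  unfold NN
  have : ((m : ℂ) + n * α).im = n * α.im := by simp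
  rw [this, mul_div_assoc, div_self him, mul_one, round_intCast]

lemma MM_spec (him : α.im ≠ 0) (m n : ℤ) : MM α ((m : ℂ) + n * α) = m := by
  unfold MM
  rw [NN_spec him]
  have : ((m : ℂ) + n * α).re = m + n * α.re := by simp
  rw [this]
  ring_nf
  exact round_intCast m

noncomputable def phi (α : ℂ) (x : Fin 5 → ℂ) : ZMod 3 × ZMod 3 :=
  ((MM α ((α - 1) * (x 0 + x 1 + x 2 + x 3 + x 4)) : ZMod 3),
   (NN α ((α - 1) * (x 0 + x 1 + x 2 + x 3 + x 4)) : ZMod 3))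

lemma phi_eq (him : α.im ≠ 0) {x : Fin 5 → ℂ} {m n : ℤ}
    (h : (α - 1) * (x 0 + x 1 + x 2 + x 3 + x 4) = (m : ℂ) + n * α) :
    phi α x = ((m : ZMod 3), (n : ZMod 3)) := by
  unfold phi
  rw [h, MM_spec him, NN_spec him]

end Stmt3Aux

open Stmt3Aux in
theorem stmt_3 (α : ℂ) (hα3 : α ^ 3 = 1) (hα1 : α ≠ 1) :
    let Zα : Set ℂ := {z | ∃ m n : ℤ, z = m + n * α}
    let e : Fin 5 → (Fin 5 → ℂ) := fun i => Pi.single i 1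
    let w : Fin 5 → ℂ := fun _ => 1
    let Λ₀ : AddSubgroup (Fin 5 → ℂ) := AddSubgroup.closure
      {x | ∃ i j : Fin 5, i < j ∧ ∃ β ∈ ({1, α, α ^ 2} : Set ℂ),
        ∃ z ∈ ({1, α} : Set ℂ), x = z • (e i - β • e j)}
    let Λ' : AddSubgroup (Fin 5 → ℂ) := AddSubgroup.closure
      ({x | ∃ i : Fin 4, ∃ z ∈ ({1, α} : Set ℂ), x = z • e i.castSucc} ∪
        {x | ∃ z ∈ ({1, α} : Set ℂ), x = (z / (α - 1)) • w})
    {x : Fin 5 → ℂ | ∀ i j : Fin 5, i < j →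
        ∀ β ∈ ({1, α, α ^ 2} : Set ℂ), x i - β * x j ∈ Zα}
      = (Λ' : Set (Fin 5 → ℂ))
    ∧ Nonempty ((Λ' ⧸ Λ₀.addSubgroupOf Λ') ≃+ (ZMod 3 × ZMod 3)) := by
  intro Zα e w Λ₀ Λ'
  have hne : α - 1 ≠ 0 := sub_ne_zero.mpr hα1
  have h2 : α ^ 2 + α + 1 = 0 := by
    have h : (α - 1) * (α ^ 2 + α + 1) = 0 := by linear_combination hα3
    rcases mul_eq_zero.mp h with h' | h'
    · exact absurd h' hne
    · exact h'
  set S : Set (Fin 5 → ℂ) := {x | ∀ i j : Fin 5, i < j →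
      ∀ β ∈ ({1, α, α ^ 2} : Set ℂ), x i - β * x j ∈ Zα} with hSdef
  -- generators of Λ'
  have hgen1 : ∀ (k : Fin 4) {z : ℂ}, P α z → z • e k.castSucc ∈ Λ' := by
    intro k z hz
    exact mem_of_P (AddSubgroup.subset_closure (Or.inl ⟨k, 1, by simp, rfl⟩))
      (AddSubgroup.subset_closure (Or.inl ⟨k, α, by simp, rfl⟩)) hz
  have hgen2 : ∀ {z : ℂ}, P α z → (z / (α - 1)) • w ∈ Λ' := by
    intro z hz
    have h1 : (1 : ℂ) • ((1 / (α - 1)) • w) ∈ Λ' := by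
      rw [one_smul]
      exact AddSubgroup.subset_closure (Or.inr ⟨1, by simp, rfl⟩)
    have ha : α • ((1 / (α - 1)) • w) ∈ Λ' := by
      rw [smul_smul, mul_one_div]
      exact AddSubgroup.subset_closure (Or.inr ⟨α, by simp, rfl⟩)
    have h := mem_of_P h1 ha hz
    rwa [smul_smul, mul_one_div] at h
  -- key coordinates facts for x ∈ S
  have h45 : (4 : Fin 5) = Fin.last 4 := rfl
  have hA : ∀ x ∈ S, ∀ i : Fin 4, P α (x i.castSucc - x 4) := by
    intro x hx i
    have h := hx i.castSucc 4 (by rw [h45]; exact Fin.castSucc_lt_last i) 1 (by simp)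
    simpa using (show P α (x i.castSucc - 1 * x 4) from h)
  have hC : ∀ x ∈ S, P α ((α - 1) * x 4) := by
    intro x hx
    have h1 : P α (x 0 - 1 * x 4) := hx 0 4 (by decide) 1 (by simp)
    have ha : P α (x 0 - α * x 4) := hx 0 4 (by decide) α (by simp)
    have h3 : (α - 1) * x 4 = (x 0 - 1 * x 4) - (x 0 - α * x 4) := by ring
    rw [h3]; exact P_sub h1 ha
  -- decomposition of x
  have hdecomp : ∀ x : Fin 5 → ℂ, x =
      (x ((0:Fin 4).castSucc) - x 4) • e ((0:Fin 4).castSucc)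
      + (x ((1:Fin 4).castSucc) - x 4) • e ((1:Fin 4).castSucc)
      + (x ((2:Fin 4).castSucc) - x 4) • e ((2:Fin 4).castSucc)
      + (x ((3:Fin 4).castSucc) - x 4) • e ((3:Fin 4).castSucc)
      + (((α - 1) * x 4) / (α - 1)) • w := by
    intro x
    have hx4 : ((α - 1) * x 4) / (α - 1) = x 4 := by field_simp
    simp only [show ((0:Fin 4).castSucc) = (0:Fin 5) from rfl,
      show ((1:Fin 4).castSucc) = (1:Fin 5) from rfl,
      show ((2:Fin 4).castSucc) = (2:Fin 5) from rfl,
      show ((3:Fin 4).castSucc) = (3:Fin 5) from rfl]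
    funext j
    fin_cases j <;> simp (config := { decide := true }) [e, w, Pi.single_apply, hx4]
  have hset : S = (Λ' : Set (Fin 5 → ℂ)) := by
    apply Set.Subset.antisymm
    · -- S ⊆ Λ'
      intro x hx
      rw [hdecomp x]
      refine AddSubgroup.add_mem _ (AddSubgroup.add_mem _ (AddSubgroup.add_mem _
        (AddSubgroup.add_mem _ ?_ ?_) ?_) ?_) ?_
      · exact hgen1 0 (hA x hx 0)
      · exact hgen1 1 (hA x hx 1)
      · exact hgen1 2 (hA x hx 2)
      · exact hgen1 3 (hA x hx 3)
      · exact hgen2 (hC x hx)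
    · -- Λ' ⊆ S
      intro y hy
      refine AddSubgroup.closure_induction (p := fun t _ => t ∈ S)
        (fun t ht => ?_) ?_ (fun a b _ _ ha hb => ?_) (fun a _ ha => ?_) hy
      · -- generators
        intro i j hij β hβ
        simp only [Set.mem_insert_iff, Set.mem_singleton_iff] at hβ
        rcases ht with ⟨k, z, hz, rfl⟩ | ⟨z, hz, rfl⟩ <;>
          simp only [Set.mem_insert_iff, Set.mem_singleton_iff] at hz
        · -- t = z • e k.castSucc
          show P α _
          simp only [Pi.smul_apply, smul_eq_mul]
          by_cases hik : i = k.castSucc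
          · subst hik
            have hjk : j ≠ k.castSucc := (ne_of_lt hij).symm
            simp only [e, Pi.single_eq_same, Pi.single_eq_of_ne hjk, mul_one, mul_zero,
              sub_zero]
            rcases hz with rfl | rfl
            · exact ⟨1, 0, by push_cast; ring⟩
            · exact ⟨0, 1, by push_cast; ring⟩
          · by_cases hjk : j = k.castSucc
            · subst hjk
              have hik' : i ≠ k.castSucc := hik
              simp only [e, Pi.single_eq_same, Pi.single_eq_of_ne hik', mul_one, mul_zero,
                zero_sub]
              rcases hβ with hβ | hβ | hβ <;> rcases hz with hz | hz <;> rw [hβ, hz]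
              · exact ⟨-1, 0, by push_cast; ring⟩
              · exact ⟨0, -1, by push_cast; ring⟩
              · exact ⟨0, -1, by push_cast; ring⟩
              · exact ⟨1, 1, by push_cast; linear_combination -h2⟩
              · exact ⟨1, 1, by push_cast; linear_combination -h2⟩
              · exact ⟨-1, 0, by push_cast; linear_combination -hα3⟩
            · have hik' : i ≠ k.castSucc := hik
              have hjk' : j ≠ k.castSucc := hjk
              simp only [e, Pi.single_eq_of_ne hik', Pi.single_eq_of_ne hjk', mul_zero,
                sub_zero]
              exact ⟨0, 0, by simp⟩
        · -- t = (z / (α - 1)) • w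
          show P α (z / (α - 1) * w i - β * (z / (α - 1) * w j))
          show P α (z / (α - 1) * 1 - β * (z / (α - 1) * 1))
          have hx : z / (α - 1) * 1 - β * (z / (α - 1) * 1) = (z - β * z) / (α - 1) := by
            ring
          rw [hx]
          rcases hβ with hβ | hβ | hβ <;> rcases hz with hz | hz <;> rw [hβ, hz]
          · exact ⟨0, 0, by rw [div_eq_iff hne]; push_cast; ring⟩
          · exact ⟨0, 0, by rw [div_eq_iff hne]; push_cast; ring⟩
          · exact ⟨-1, 0, by rw [div_eq_iff hne]; push_cast; ring⟩
          · exact ⟨0, -1, by rw [div_eq_iff hne]; push_cast; ring⟩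
          · exact ⟨-1, -1, by rw [div_eq_iff hne]; push_cast; ring⟩
          · exact ⟨1, 0, by rw [div_eq_iff hne]; push_cast; linear_combination -hα3⟩
      · -- zero
        intro i j hij β hβ
        exact ⟨0, 0, by simp⟩
      · -- add
        intro i j hij β hβ
        have h := P_add (ha i j hij β hβ) (hb i j hij β hβ)
        have heq : (a + b) i - β * (a + b) j
            = (a i - β * a j) + (b i - β * b j) := by
          simp only [Pi.add_apply]; ring
        rw [heq]; exact h
      · -- neg
        intro i j hij β hβ
        have h := P_neg (ha i j hij β hβ)
        have heq : (-a) i - β * (-a) j = -(a i - β * a j) := by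
          simp only [Pi.neg_apply]; ring
        rw [heq]; exact h
  refine ⟨hset, ?_⟩
  have halim : α.im ≠ 0 := him h2
  -- P facts for elements of S
  have hsig : ∀ x ∈ S, P α ((α - 1) * (x 0 + x 1 + x 2 + x 3 + x 4)) := by
    intro x hx
    have h0 : P α (x 0 - x 4) := hA x hx 0
    have h1 : P α (x 1 - x 4) := hA x hx 1
    have h2' : P α (x 2 - x 4) := hA x hx 2
    have h3 : P α (x 3 - x 4) := hA x hx 3
    have hc : P α ((α - 1) * x 4) := hC x hx
    have heq : (α - 1) * (x 0 + x 1 + x 2 + x 3 + x 4)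
        = (α - 1) * ((x 0 - x 4) + (x 1 - x 4) + (x 2 - x 4) + (x 3 - x 4))
          + 5 * ((α - 1) * x 4) := by ring
    rw [heq]
    exact P_add (P_mul h2 ⟨-1, 1, by push_cast; ring⟩
        (P_add (P_add (P_add h0 h1) h2') h3))
      (P_mul h2 ⟨5, 0, by push_cast; ring⟩ hc)
  have hsig' : ∀ x ∈ Λ', P α ((α - 1) * (x 0 + x 1 + x 2 + x 3 + x 4)) := by
    intro x hx
    exact hsig x (show x ∈ S by rw [hset]; exact hx)
  -- the homomorphism
  have hadd : ∀ x y : Λ', phi α ((x : Fin 5 → ℂ) + (y : Fin 5 → ℂ))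
      = phi α (x : Fin 5 → ℂ) + phi α (y : Fin 5 → ℂ) := by
    rintro ⟨x, hx⟩ ⟨y, hy⟩
    obtain ⟨mx, nx, hmx⟩ := hsig' x hx
    obtain ⟨my, ny, hmy⟩ := hsig' y hy
    have hxy : (α - 1) * ((x + y) 0 + (x + y) 1 + (x + y) 2 + (x + y) 3 + (x + y) 4)
        = ((mx + my : ℤ) : ℂ) + ((nx + ny : ℤ) : ℂ) * α := by
      simp only [Pi.add_apply]
      push_cast
      linear_combination hmx + hmy
    rw [phi_eq halim hxy, phi_eq halim hmx, phi_eq halim hmy]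
    ext <;> simp only [Prod.fst_add, Prod.snd_add] <;> push_cast <;> ring
  let φ : Λ' →+ ZMod 3 × ZMod 3 := AddMonoidHom.mk' (fun x => phi α (x : Fin 5 → ℂ)) hadd
  -- membership of Zα-multiples of generators in Λ₀
  have hZ0 : ∀ (i j : Fin 5), i < j → ∀ β ∈ ({1, α, α ^ 2} : Set ℂ), ∀ {z : ℂ},
      P α z → z • (e i - β • e j) ∈ Λ₀ := by
    intro i j hij β hβ z hz
    exact mem_of_P (G := Λ₀) (v := e i - β • e j)
      (AddSubgroup.subset_closure ⟨i, j, hij, β, hβ, 1, Or.inl rfl, rfl⟩)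
      (AddSubgroup.subset_closure ⟨i, j, hij, β, hβ, α, Or.inr rfl, rfl⟩) hz
  -- φ vanishes on Λ₀
  have hQ : ∀ y ∈ Λ₀, ∃ m n : ℤ,
      (α - 1) * (y 0 + y 1 + y 2 + y 3 + y 4) = 3 * m + 3 * n * α := by
    intro y hy
    refine AddSubgroup.closure_induction
      (p := fun t _ => ∃ m n : ℤ,
        (α - 1) * (t 0 + t 1 + t 2 + t 3 + t 4) = 3 * m + 3 * n * α)
      (fun t ht => ?_) ?_ (fun a b _ _ ha hb => ?_) (fun a _ ha => ?_) hy
    · obtain ⟨i, j, hij, β, hβ, z, hz, rfl⟩ := ht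
      have hs1 : ∀ k : Fin 5, e k 0 + e k 1 + e k 2 + e k 3 + e k 4 = 1 := by
        intro k
        fin_cases k <;> simp (config := { decide := true }) [e, Pi.single_apply]
      have hsum : (z • (e i - β • e j)) 0 + (z • (e i - β • e j)) 1
          + (z • (e i - β • e j)) 2 + (z • (e i - β • e j)) 3
          + (z • (e i - β • e j)) 4 = z * (1 - β) := by
        simp only [Pi.smul_apply, Pi.sub_apply, smul_eq_mul]
        linear_combination z * hs1 i - z * β * hs1 j
      rw [hsum]
      simp only [Set.mem_insert_iff, Set.mem_singleton_iff] at hβ hz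
      rcases hβ with hβ | hβ | hβ <;> rcases hz with hz | hz <;> rw [hβ, hz]
      · exact ⟨0, 0, by push_cast; ring⟩
      · exact ⟨0, 0, by push_cast; ring⟩
      · exact ⟨0, 1, by push_cast; linear_combination -h2⟩
      · exact ⟨-1, -1, by push_cast; linear_combination -hα3 + 2*h2⟩
      · exact ⟨-1, 0, by push_cast; linear_combination h2 - hα3⟩
      · exact ⟨0, -1, by push_cast; linear_combination h2 - (α - 1)*hα3⟩
    · exact ⟨0, 0, by simp⟩
    · obtain ⟨m, n, hm⟩ := ha
      obtain ⟨m', n', hm'⟩ := hb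
      refine ⟨m + m', n + n', ?_⟩
      simp only [Pi.add_apply]
      push_cast
      linear_combination hm + hm'
    · obtain ⟨m, n, hm⟩ := ha
      refine ⟨-m, -n, ?_⟩
      simp only [Pi.neg_apply]
      push_cast
      linear_combination -hm
  -- kernel = Λ₀.addSubgroupOf Λ'
  have hker : φ.ker = Λ₀.addSubgroupOf Λ' := by
    ext x
    simp only [AddMonoidHom.mem_ker, AddSubgroup.mem_addSubgroupOf]
    constructor
    · -- hard direction
      intro hx0
      obtain ⟨m, n, hmn⟩ := hsig' x.1 x.2
      have hphix : φ x = ((m : ZMod 3), (n : ZMod 3)) := phi_eq halim hmn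
      rw [hx0] at hphix
      have hm0 : ((m : ZMod 3)) = 0 := by
        have := congrArg Prod.fst hphix; simpa using this.symm
      have hn0 : ((n : ZMod 3)) = 0 := by
        have := congrArg Prod.snd hphix; simpa using this.symm
      obtain ⟨m', hm'⟩ := (ZMod.intCast_zmod_eq_zero_iff_dvd m 3).mp hm0
      obtain ⟨n', hn'⟩ := (ZMod.intCast_zmod_eq_zero_iff_dvd n 3).mp hn0
      subst hm'; subst hn'
      set y := (x : Fin 5 → ℂ) with hy
      have hyS : y ∈ S := by rw [hset]; exact x.2
      have hA0 : P α (y 0 - y 4) := hA y hyS 0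
      have hA1 : P α (y 1 - y 4) := hA y hyS 1
      have hA2 : P α (y 2 - y 4) := hA y hyS 2
      have hA3 : P α (y 3 - y 4) := hA y hyS 3
      have hCy : P α ((α - 1) * y 4) := hC y hyS
      -- explicit cp with (α-1) * y 4 = (α-1) * cp
      set cp : ℂ := (-4 - 2*α) * ((α - 1) * y 4)
        - ((-2 - α) * ((m' : ℂ) + (n' : ℂ) * α)
          - ((y 0 - y 4) + (y 1 - y 4) + (y 2 - y 4) + (y 3 - y 4))) with hcp
      have hcpP : P α cp := by
        refine P_sub (P_mul h2 ⟨-4, -2, by push_cast; ring⟩ hCy)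
          (P_sub (P_mul h2 ⟨-2, -1, by push_cast; ring⟩ ⟨m', n', by push_cast; ring⟩)
            (P_add (P_add (P_add hA0 hA1) hA2) hA3))
      have hCcp : (α - 1) * y 4 = (α - 1) * cp := by
        rw [hcp]
        push_cast at hmn ⊢
        linear_combination -hmn + (2*((α - 1) * y 4) - ((m' : ℂ) + (n' : ℂ) * α)) * h2
      have hy4 : y 4 = cp := mul_left_cancel₀ hne hCcp
      set d0 : ℂ := (1 + α) * ((m' : ℂ) + (n' : ℂ) * α) with hd0
      have hd0P : P α d0 := P_mul h2 ⟨1, 1, by push_cast; ring⟩ ⟨m', n', by push_cast; ring⟩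
      have hd : (y 0 - y 4) + (y 1 - y 4) + (y 2 - y 4) + (y 3 - y 4) + 5 * cp
          = (α - 1) * d0 := by
        have hmul : (α - 1) * ((y 0 - y 4) + (y 1 - y 4) + (y 2 - y 4) + (y 3 - y 4)
            + 5 * cp) = (α - 1) * ((α - 1) * d0) := by
          rw [hd0]
          push_cast at hmn ⊢
          linear_combination 6 * hmn
            + (6 * ((m' : ℂ) + (n' : ℂ) * α) - 10 * ((α - 1) * y 4)) * h2
            - ((m' : ℂ) + (n' : ℂ) * α) * hα3
        exact mul_left_cancel₀ hne hmul
      have hfinal : y = (y 0 - y 4 + cp) • (e 0 - (1:ℂ) • e 4)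
          + (y 1 - y 4 + cp) • (e 1 - (1:ℂ) • e 4)
          + (y 2 - y 4 + cp) • (e 2 - (1:ℂ) • e 4)
          + (y 3 - y 4 + cp) • (e 3 - (1:ℂ) • e 4)
          + (d0 • (e 3 - (1:ℂ) • e 4) - d0 • (e 3 - α • e 4)) := by
        funext j
        fin_cases j <;>
          simp (config := { decide := true }) [e, Pi.single_apply] <;>
          first
            | linear_combination hy4
            | linear_combination hy4 + hd
            | linear_combination hy4 - hd
            | linear_combination hd - 4*hy4
            | linear_combination hd + 4*hy4
      show y ∈ Λ₀
      rw [hfinal]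
      have hβ1 : (1:ℂ) ∈ ({1, α, α ^ 2} : Set ℂ) := Or.inl rfl
      have hβα : α ∈ ({1, α, α ^ 2} : Set ℂ) := Or.inr (Or.inl rfl)
      refine add_mem (add_mem (add_mem (add_mem ?_ ?_) ?_) ?_) (sub_mem ?_ ?_)
      · exact hZ0 0 4 (by decide) 1 hβ1 (P_add hA0 hcpP)
      · exact hZ0 1 4 (by decide) 1 hβ1 (P_add hA1 hcpP)
      · exact hZ0 2 4 (by decide) 1 hβ1 (P_add hA2 hcpP)
      · exact hZ0 3 4 (by decide) 1 hβ1 (P_add hA3 hcpP)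
      · exact hZ0 3 4 (by decide) 1 hβ1 hd0P
      · exact hZ0 3 4 (by decide) α hβα hd0P
    · -- easy direction
      intro hx0
      obtain ⟨m, n, hmn⟩ := hQ x.1 hx0
      have hmn' : (α - 1) * ((x : Fin 5 → ℂ) 0 + (x : Fin 5 → ℂ) 1 + (x : Fin 5 → ℂ) 2
          + (x : Fin 5 → ℂ) 3 + (x : Fin 5 → ℂ) 4) = ((3*m : ℤ) : ℂ) + ((3*n : ℤ) : ℂ) * α := by
        push_cast
        linear_combination hmn
      have hx3 : φ x = (((3*m : ℤ) : ZMod 3), ((3*n : ℤ) : ZMod 3)) := phi_eq halim hmn'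
      have hm0 : ((3*m : ℤ) : ZMod 3) = 0 := (ZMod.intCast_zmod_eq_zero_iff_dvd _ 3).mpr ⟨m, rfl⟩
      have hn0 : ((3*n : ℤ) : ZMod 3) = 0 := (ZMod.intCast_zmod_eq_zero_iff_dvd _ 3).mpr ⟨n, rfl⟩
      rw [hx3, hm0, hn0]
      rfl
  -- surjectivity
  have hg1mem : e ((0 : Fin 4).castSucc) ∈ Λ' :=
    AddSubgroup.subset_closure (Or.inl ⟨0, 1, Or.inl rfl, (one_smul ℂ _).symm⟩)
  have hg2mem : ((1 : ℂ) / (α - 1)) • w ∈ Λ' :=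
    AddSubgroup.subset_closure (Or.inr ⟨1, Or.inl rfl, rfl⟩)
  let g1 : Λ' := ⟨_, hg1mem⟩
  let g2 : Λ' := ⟨_, hg2mem⟩
  have hφg1 : φ g1 = (((-1 : ℤ) : ZMod 3), ((1 : ℤ) : ZMod 3)) := by
    apply phi_eq halim
    have he : ∀ k : Fin 5, e ((0 : Fin 4).castSucc) k = (if k = 0 then (1:ℂ) else 0) := by
      intro k
      fin_cases k <;> simp (config := { decide := true }) [e, Pi.single_apply]
    simp only [g1, he]
    simp (config := { decide := true })
    push_cast
    ring
  have hφg2 : φ g2 = (((5 : ℤ) : ZMod 3), ((0 : ℤ) : ZMod 3)) := by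
    apply phi_eq halim
    have hwk : ∀ k : Fin 5, (((1 : ℂ) / (α - 1)) • w) k = 1 / (α - 1) := by
      intro k; simp [w]
    simp only [g2, hwk]
    push_cast
    field_simp
    ring
  have hsurj : Function.Surjective φ := by
    intro p
    have hdec : ∀ y : ZMod 3 × ZMod 3, ∃ s t : Fin 3,
        y = (s : ℕ) • ((((-1 : ℤ) : ZMod 3), ((1 : ℤ) : ZMod 3)) : ZMod 3 × ZMod 3)
          + (t : ℕ) • ((((5 : ℤ) : ZMod 3), ((0 : ℤ) : ZMod 3)) : ZMod 3 × ZMod 3) := by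
      decide
    obtain ⟨s, t, hy⟩ := hdec p
    refine ⟨(s : ℕ) • g1 + (t : ℕ) • g2, ?_⟩
    rw [map_add, map_nsmul, map_nsmul, hφg1, hφg2, hy]
  exact ⟨(QuotientAddGroup.quotientAddEquivOfEq hker.symm).trans
    (QuotientAddGroup.quotientKerEquivOfSurjective φ hsurj)⟩
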